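/- Let X be a finite set, p a pmf on X with p(x) > 0 for all x, and r : X → ℝ. Then the function π ↦ D_KL(π ‖ p) − E_π[r], over pmfs π on X, attains its minimum at π*(x) = p(x)·exp(r(x)) / Σ_y p(y)·exp(r(y)), and the minimum value equals −log Σ_y p(y)·exp(r(y)). -/

import Mathlib

open Finset Real

theorem kl_reward_min {X : Type*} [Fintype X]
    (p : X → ℝ) (hp : ∀ x, 0 < p x) (hp1 : ∑ x, p x = 1)
    (r : X → ℝ) :
    (∀ q : X → ℝ, (∀ x, 0 ≤ q x) → (∑ x, q x = 1) →
        (∑ x, (fun y => p y * Real.exp (r y) / (∑ z, p z * Real.exp (r z))) x *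
            Real.log ((fun y => p y * Real.exp (r y) / (∑ z, p z * Real.exp (r z))) x / p x))
          - (∑ x, (fun y => p y * Real.exp (r y) / (∑ z, p z * Real.exp (r z))) x * r x)
        ≤ (∑ x, q x * Real.log (q x / p x)) - (∑ x, q x * r x)) ∧
      ((∑ x, (fun y => p y * Real.exp (r y) / (∑ z, p z * Real.exp (r z))) x *
            Real.log ((fun y => p y * Real.exp (r y) / (∑ z, p z * Real.exp (r z))) x / p x))
          - (∑ x, (fun y => p y * Real.exp (r y) / (∑ z, p z * Real.exp (r z))) x * r x)
        = - Real.log (∑ z, p z * Real.exp (r z))) := by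
  simp only
  set Z : ℝ := ∑ z, p z * Real.exp (r z) with hZdef
  have hne : (Finset.univ : Finset X).Nonempty := by
    by_contra h
    rw [Finset.not_nonempty_iff_eq_empty] at h
    rw [h] at hp1
    simp at hp1
  have hZ : 0 < Z := Finset.sum_pos (fun x _ => mul_pos (hp x) (Real.exp_pos _)) hne
  have hπpos : ∀ x, 0 < p x * Real.exp (r x) / Z :=
    fun x => div_pos (mul_pos (hp x) (Real.exp_pos _)) hZ
  have hπsum : ∑ x, p x * Real.exp (r x) / Z = 1 := by
    rw [← Finset.sum_div, ← hZdef, div_self (ne_of_gt hZ)]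
  have hlog : ∀ x, Real.log ((p x * Real.exp (r x) / Z) / p x) = r x - Real.log Z := by
    intro x
    have h1 : (p x * Real.exp (r x) / Z) / p x = Real.exp (r x) / Z := by
      rw [div_right_comm, mul_div_cancel_left₀ _ (ne_of_gt (hp x))]
    rw [h1, Real.log_div (Real.exp_ne_zero _) (ne_of_gt hZ), Real.log_exp]
  have hval : (∑ x, (p x * Real.exp (r x) / Z) * Real.log ((p x * Real.exp (r x) / Z) / p x))
      - (∑ x, (p x * Real.exp (r x) / Z) * r x) = - Real.log Z := by
    have : ∀ x, (p x * Real.exp (r x) / Z) * Real.log ((p x * Real.exp (r x) / Z) / p x)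
        = (p x * Real.exp (r x) / Z) * r x - (p x * Real.exp (r x) / Z) * Real.log Z := by
      intro x; rw [hlog x]; ring
    simp only [this]
    rw [Finset.sum_sub_distrib, ← Finset.sum_mul, hπsum]
    ring
  refine ⟨?_, hval⟩
  intro q hq hq1
  rw [hval]
  have key : ∀ x, q x - (p x * Real.exp (r x) / Z) - q x * Real.log Z
      ≤ q x * Real.log (q x / p x) - q x * r x := by
    intro x
    rcases eq_or_lt_of_le (hq x) with h0 | h0
    · rw [← h0]
      simp
      exact le_of_lt (hπpos x)
    · -- q x > 0
      have hπx := hπpos x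
      have h2 : Real.log ((p x * Real.exp (r x) / Z) / q x)
          ≤ (p x * Real.exp (r x) / Z) / q x - 1 :=
        Real.log_le_sub_one_of_pos (div_pos hπx h0)
      have h3 : q x * Real.log ((p x * Real.exp (r x) / Z) / q x)
          ≤ (p x * Real.exp (r x) / Z) - q x := by
        have := mul_le_mul_of_nonneg_left h2 (le_of_lt h0)
        calc q x * Real.log ((p x * Real.exp (r x) / Z) / q x)
            ≤ q x * ((p x * Real.exp (r x) / Z) / q x - 1) := this
          _ = (p x * Real.exp (r x) / Z) - q x := by
              field_simp
      have hlq : Real.log ((p x * Real.exp (r x) / Z) / q x)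
          = Real.log (p x) + r x - Real.log Z - Real.log (q x) := by
        rw [Real.log_div (ne_of_gt hπx) (ne_of_gt h0),
          Real.log_div (ne_of_gt (mul_pos (hp x) (Real.exp_pos _))) (ne_of_gt hZ),
          Real.log_mul (ne_of_gt (hp x)) (Real.exp_ne_zero _), Real.log_exp]
      have hlqp : Real.log (q x / p x) = Real.log (q x) - Real.log (p x) :=
        Real.log_div (ne_of_gt h0) (ne_of_gt (hp x))
      rw [hlq] at h3
      rw [hlqp]
      nlinarith [h3]
  calc -Real.log Z = ∑ x, (q x - (p x * Real.exp (r x) / Z) - q x * Real.log Z) := by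
        simp only [Finset.sum_sub_distrib, ← Finset.sum_mul, hq1, hπsum]
        ring
    _ ≤ ∑ x, (q x * Real.log (q x / p x) - q x * r x) :=
        Finset.sum_le_sum (fun x _ => key x)
    _ = (∑ x, q x * Real.log (q x / p x)) - (∑ x, q x * r x) := by
        rw [Finset.sum_sub_distrib]
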